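/- For the wheel graph W_n with n ≥ 4 vertices (a cycle on n−1 vertices joined to one central vertex), the 1-nearly vertex independence number equals ⌊n/2⌋. -/

import Mathlib

/-- The 1-nearly vertex independence number: the maximum cardinality of a set of
vertices whose induced subgraph has exactly one edge (0 if none exists). -/
noncomputable def alpha1 {V : Type*} (G : SimpleGraph V) : ℕ :=
  sSup {k : ℕ | ∃ s : Set V, s.ncard = k ∧ {e ∈ G.edgeSet | ∀ v ∈ e, v ∈ s}.ncard = 1}

/-- The join of two graphs: all edges of both, plus all edges between them. -/
def graphJoin {α β : Type*} (G : SimpleGraph α) (H : SimpleGraph β) :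
    SimpleGraph (α ⊕ β) where
  Adj x y :=
    match x, y with
    | Sum.inl a, Sum.inl b => G.Adj a b
    | Sum.inr a, Sum.inr b => H.Adj a b
    | _, _ => True
  symm := by constructor; rintro (a | a) (b | b) h <;> first | exact h.symm | trivial
  loopless := by constructor; rintro (a | a) h <;> exact SimpleGraph.irrefl _ h

lemma natmod (a m : ℕ) (h : a < 2*m) : (a < m ∧ a % m = a) ∨ (m ≤ a ∧ a % m = a - m) := by
  rcases Nat.lt_or_ge a m with h' | h'
  · exact Or.inl ⟨h', Nat.mod_eq_of_lt h'⟩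
  · exact Or.inr ⟨h', by rw [Nat.mod_eq_sub_mod h', Nat.mod_eq_of_lt (by omega)]⟩

lemma cyc_adj (m : ℕ) (hm : 3 ≤ m) (u v : Fin m) :
    (SimpleGraph.cycleGraph m).Adj u v ↔
      (u.val + 1 = v.val ∨ v.val + 1 = u.val ∨ (u.val = 0 ∧ v.val + 1 = m) ∨
        (v.val = 0 ∧ u.val + 1 = m)) := by
  rw [SimpleGraph.cycleGraph_adj', Fin.sub_def, Fin.sub_def]
  simp only [Fin.val_mk]
  have hu := u.isLt; have hv := v.isLt
  rcases natmod (m - v.val + u.val) m (by omega) with ⟨h1, e1⟩ | ⟨h1, e1⟩ <;>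
    rcases natmod (m - u.val + v.val) m (by omega) with ⟨h2, e2⟩ | ⟨h2, e2⟩ <;>
    rw [e1, e2] <;> omega

/-- auxiliary vertex selector : 0, 1, 3, 5, ... -/
def wf (i : ℕ) : ℕ := if i = 0 then 0 else 2 * i - 1

lemma wf_cases (i : ℕ) : (i = 0 ∧ wf i = 0) ∨ (1 ≤ i ∧ wf i = 2 * i - 1) := by
  unfold wf; split
  · rename_i h; exact Or.inl ⟨h, rfl⟩
  · rename_i h; exact Or.inr ⟨by omega, rfl⟩

def wg (m : ℕ) (hm : 0 < m) (i : ℕ) : Fin m ⊕ Fin 1 := Sum.inl ⟨wf i % m, Nat.mod_lt _ hm⟩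

lemma witness (m : ℕ) (hm : 3 ≤ m) :
    ∃ s : Set (Fin m ⊕ Fin 1), s.ncard = (m + 1) / 2 ∧
      {e ∈ (graphJoin (SimpleGraph.cycleGraph m) (⊤ : SimpleGraph (Fin 1))).edgeSet |
        ∀ v ∈ e, v ∈ s}.ncard = 1 := by
  have hm0 : 0 < m := by omega
  set N := (m + 1) / 2 with hN
  have hlt : ∀ i < N, wf i < m := by
    intro i hi; rcases wf_cases i with ⟨_, h⟩ | ⟨_, h⟩ <;> omega
  refine ⟨wg m hm0 '' ↑(Finset.range N), ?_, ?_⟩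
  · rw [Set.ncard_image_of_injOn, Set.ncard_coe_finset, Finset.card_range]
    intro i hi j hj hij
    simp only [Finset.mem_coe, Finset.mem_range] at hi hj
    have : wf i % m = wf j % m := by
      have := congrArg (fun x => match x with | Sum.inl a => a.val | Sum.inr _ => 0) hij
      simpa [wg] using this
    rw [Nat.mod_eq_of_lt (hlt i hi), Nat.mod_eq_of_lt (hlt j hj)] at this
    rcases wf_cases i with ⟨h1, h2⟩ | ⟨h1, h2⟩ <;> rcases wf_cases j with ⟨h3, h4⟩ | ⟨h3, h4⟩ <;>
      omega
  · have h0 : (0:ℕ) < m := by omega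
    have h1 : (1:ℕ) < m := by omega
    have hset : {e ∈ (graphJoin (SimpleGraph.cycleGraph m) (⊤ : SimpleGraph (Fin 1))).edgeSet |
        ∀ v ∈ e, v ∈ wg m hm0 '' ↑(Finset.range N)} =
        {s(Sum.inl ⟨0, h0⟩, Sum.inl ⟨1, h1⟩)} := by
      ext e
      induction e using Sym2.ind with
      | _ x y =>
        simp only [Set.mem_setOf_eq, SimpleGraph.mem_edgeSet, Sym2.mem_iff, forall_eq_or_imp,
          forall_eq, Set.mem_singleton_iff]
        constructor
        · rintro ⟨hadj, hx, hy⟩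
          obtain ⟨i, hi, rfl⟩ := hx
          obtain ⟨j, hj, rfl⟩ := hy
          simp only [Finset.mem_coe, Finset.mem_range] at hi hj
          have hadj' : (SimpleGraph.cycleGraph m).Adj ⟨wf i % m, Nat.mod_lt _ hm0⟩
              ⟨wf j % m, Nat.mod_lt _ hm0⟩ := hadj
          rw [cyc_adj m hm] at hadj'
          simp only [Fin.val_mk] at hadj'
          have mi : wf i % m = wf i := Nat.mod_eq_of_lt (hlt i hi)
          have mj : wf j % m = wf j := Nat.mod_eq_of_lt (hlt j hj)
          rw [Sym2.eq_iff]
          simp only [wg, Sum.inl.injEq, Fin.mk.injEq]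
          rcases wf_cases i with ⟨g1, g2⟩ | ⟨g1, g2⟩ <;>
            rcases wf_cases j with ⟨g3, g4⟩ | ⟨g3, g4⟩ <;> omega
        · intro h
          rw [Sym2.eq_iff] at h
          have hN2 : 2 ≤ N := by omega
          have hmem0 : Sum.inl (⟨0, h0⟩ : Fin m) ∈ wg m hm0 '' ↑(Finset.range N) := by
            refine ⟨0, by simp; omega, ?_⟩
            simp [wg, wf]
          have hmem1 : Sum.inl (⟨1, h1⟩ : Fin m) ∈ wg m hm0 '' ↑(Finset.range N) := by
            refine ⟨1, by simp; omega, ?_⟩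
            simp only [wg, wf]
            norm_num [Nat.mod_eq_of_lt h1]
          have hadj01 : (graphJoin (SimpleGraph.cycleGraph m)
              (⊤ : SimpleGraph (Fin 1))).Adj (Sum.inl ⟨0, h0⟩) (Sum.inl ⟨1, h1⟩) := by
            show (SimpleGraph.cycleGraph m).Adj _ _
            rw [cyc_adj m hm]
            left; rfl
          rcases h with ⟨rfl, rfl⟩ | ⟨rfl, rfl⟩
          · exact ⟨hadj01, hmem0, hmem1⟩
          · exact ⟨hadj01.symm, hmem1, hmem0⟩
    rw [hset, Set.ncard_singleton]

lemma upper (m : ℕ) (hm : 3 ≤ m) (s : Set (Fin m ⊕ Fin 1))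
    (hone : {e ∈ (graphJoin (SimpleGraph.cycleGraph m)
      (⊤ : SimpleGraph (Fin 1))).edgeSet | ∀ v ∈ e, v ∈ s}.ncard = 1) :
    s.ncard ≤ (m + 1) / 2 := by
  set G := graphJoin (SimpleGraph.cycleGraph m) (⊤ : SimpleGraph (Fin 1)) with hG
  obtain ⟨e₀, he₀⟩ := Set.ncard_eq_one.mp hone
  have hmemE : ∀ p q : Fin m ⊕ Fin 1, G.Adj p q → p ∈ s → q ∈ s →
      s(p, q) ∈ {e ∈ G.edgeSet | ∀ v ∈ e, v ∈ s} := by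
    intro p q hadj hp hq
    refine Set.mem_sep_iff.mpr ⟨by rwa [SimpleGraph.mem_edgeSet], ?_⟩
    intro v hv
    rcases Sym2.mem_iff.mp hv with rfl | rfl
    exacts [hp, hq]
  have huniq : ∀ p q u w : Fin m ⊕ Fin 1, G.Adj p q → p ∈ s → q ∈ s →
      G.Adj u w → u ∈ s → w ∈ s → s(p, q) = s(u, w) := by
    intro p q u w h1 h2 h3 h4 h5 h6
    have m1 := hmemE p q h1 h2 h3
    have m2 := hmemE u w h4 h5 h6
    rw [he₀] at m1 m2
    rw [Set.mem_singleton_iff.mp m1, Set.mem_singleton_iff.mp m2]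
  by_cases hhub : Sum.inr (0 : Fin 1) ∈ s
  · -- at most one cycle vertex
    have hclaim : ∀ a b : Fin m, Sum.inl a ∈ s → Sum.inl b ∈ s → a = b := by
      intro a b ha hb
      have heq := huniq (Sum.inr 0) (Sum.inl a) (Sum.inr 0) (Sum.inl b)
        trivial hhub ha trivial hhub hb
      rw [Sym2.eq_iff] at heq
      rcases heq with ⟨-, h⟩ | ⟨h, -⟩
      · exact Sum.inl.inj h
      · exact absurd h (by simp)
    have h2le : (2:ℕ) ≤ (m+1)/2 := by omega
    by_cases hex : ∃ a : Fin m, Sum.inl a ∈ s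
    · obtain ⟨a₀, ha₀⟩ := hex
      have hsub : s ⊆ {Sum.inr 0, Sum.inl a₀} := by
        rintro (a | b) hx
        · rw [hclaim a a₀ hx ha₀]; simp
        · rw [Subsingleton.elim b 0]; simp
      have hle := Set.ncard_le_ncard hsub (Set.toFinite _)
      have hle2 : ({Sum.inr 0, Sum.inl a₀} : Set (Fin m ⊕ Fin 1)).ncard ≤ 2 := by
        refine le_trans (Set.ncard_insert_le _ _) ?_
        simp [Set.ncard_singleton]
      omega
    · push_neg at hex
      have hsub : s ⊆ {Sum.inr 0} := by
        rintro (a | b) hx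
        · exact absurd hx (hex a)
        · rw [Subsingleton.elim b 0]; simp
      have hle := Set.ncard_le_ncard hsub (Set.toFinite _)
      rw [Set.ncard_singleton] at hle
      omega
  · -- no hub: all vertices on the cycle
    have hs : s = Sum.inl '' (Sum.inl ⁻¹' s) := by
      ext x
      cases x with
      | inl a => simp
      | inr b =>
        simp only [Set.mem_image, Set.mem_preimage, reduceCtorEq, and_false, exists_false,
          iff_false]
        rw [Subsingleton.elim b 0]
        exact hhub
    set T := Sum.inl ⁻¹' s with hT
    rw [hs, Set.ncard_image_of_injective _ Sum.inl_injective]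
    by_contra hbig
    push_neg at hbig
    have hfin : T.Finite := Set.toFinite T
    have hTcard : (m + 1) / 2 < hfin.toFinset.card := by
      rw [Set.ncard_eq_toFinset_card _ hfin] at hbig; exact hbig
    have hTs : ∀ v : Fin m, v ∈ hfin.toFinset → Sum.inl v ∈ s := by
      intro v hv
      exact Set.mem_preimage.mp (hfin.mem_toFinset.mp hv)
    -- pigeonhole 1 : pairs {2k, 2k+1}
    obtain ⟨x, hx, y, hy, hxy, hfxy⟩ := Finset.exists_ne_map_eq_of_card_lt_of_maps_to
      (t := Finset.range ((m+1)/2)) (by rw [Finset.card_range]; omega)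
      (fun v _ => by simp only [Finset.mem_range]; have := v.isLt; omega : 
        ∀ v ∈ hfin.toFinset, v.val / 2 ∈ Finset.range ((m+1)/2))
    have hxyv : x.val ≠ y.val := fun h => hxy (Fin.ext h)
    obtain ⟨a, b, haT, hbT, hab, hev⟩ : ∃ a b : Fin m, a ∈ hfin.toFinset ∧ b ∈ hfin.toFinset ∧
        a.val + 1 = b.val ∧ a.val % 2 = 0 := by
      rcases Nat.lt_or_ge x.val y.val with h | h
      · exact ⟨x, y, hx, hy, by omega, by omega⟩
      · exact ⟨y, x, hy, hx, by omega, by omega⟩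
    -- pigeonhole 2 : pairs {2k+1, 2k+2 (mod m)}
    obtain ⟨u, hu, w, hw, huw, hfuw⟩ := Finset.exists_ne_map_eq_of_card_lt_of_maps_to
      (t := Finset.range ((m+1)/2)) (by rw [Finset.card_range]; omega)
      (fun v _ => by
        simp only [Finset.mem_range]
        have := Nat.mod_lt (v.val + 1) (show 0 < m by omega); omega : 
        ∀ v ∈ hfin.toFinset, ((v.val + 1) % m) / 2 ∈ Finset.range ((m+1)/2))
    have huwv : u.val ≠ w.val := fun h => huw (Fin.ext h)
    have hu' := u.isLt; have hw' := w.isLt; have ha' := a.isLt; have hb' := b.isLt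
    have c := natmod (u.val + 1) m (by omega)
    have d := natmod (w.val + 1) m (by omega)
    have hadjuw : G.Adj (Sum.inl u) (Sum.inl w) := by
      show (SimpleGraph.cycleGraph m).Adj u w
      rw [cyc_adj m hm]
      rcases c with ⟨c1, c2⟩ | ⟨c1, c2⟩ <;> rcases d with ⟨d1, d2⟩ | ⟨d1, d2⟩ <;>
        rw [c2, d2] at hfuw <;> omega
    have hadjab : G.Adj (Sum.inl a) (Sum.inl b) := by
      show (SimpleGraph.cycleGraph m).Adj a b
      rw [cyc_adj m hm]
      left; exact hab
    have heq := huniq (Sum.inl a) (Sum.inl b) (Sum.inl u) (Sum.inl w)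
      hadjab (hTs a haT) (hTs b hbT) hadjuw (hTs u hu) (hTs w hw)
    rw [Sym2.eq_iff] at heq
    have heq' : (a.val = u.val ∧ b.val = w.val) ∨ (a.val = w.val ∧ b.val = u.val) := by
      rcases heq with ⟨h1, h2⟩ | ⟨h1, h2⟩
      · exact Or.inl ⟨congrArg Fin.val (Sum.inl.inj h1), congrArg Fin.val (Sum.inl.inj h2)⟩
      · exact Or.inr ⟨congrArg Fin.val (Sum.inl.inj h1), congrArg Fin.val (Sum.inl.inj h2)⟩
    rcases c with ⟨c1, c2⟩ | ⟨c1, c2⟩ <;> rcases d with ⟨d1, d2⟩ | ⟨d1, d2⟩ <;>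
      rw [c2, d2] at hfuw <;> omega

lemma alpha1_aux (m : ℕ) (hm : 3 ≤ m) :
    alpha1 (graphJoin (SimpleGraph.cycleGraph m) (⊤ : SimpleGraph (Fin 1))) = (m + 1) / 2 := by
  obtain ⟨s₀, hs₀, hs₀e⟩ := witness m hm
  unfold alpha1
  have hubd : ∀ k ∈ {k : ℕ | ∃ s : Set (Fin m ⊕ Fin 1), s.ncard = k ∧
      {e ∈ (graphJoin (SimpleGraph.cycleGraph m)
        (⊤ : SimpleGraph (Fin 1))).edgeSet | ∀ v ∈ e, v ∈ s}.ncard = 1}, k ≤ (m + 1) / 2 := by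
    rintro k ⟨s, rfl, hone⟩
    exact upper m hm s hone
  apply le_antisymm
  · exact csSup_le ⟨(m + 1) / 2, s₀, hs₀, hs₀e⟩ hubd
  · exact le_csSup ⟨(m + 1) / 2, hubd⟩ ⟨s₀, hs₀, hs₀e⟩

theorem alpha1_wheelGraph (n : ℕ) (hn : 4 ≤ n) :
    alpha1 (graphJoin (SimpleGraph.cycleGraph (n - 1)) (⊤ : SimpleGraph (Fin 1))) = n / 2 := by
  rw [alpha1_aux (n - 1) (by omega)]
  omega
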